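/- Let φ be a free minimal action of ℤ² on a Cantor set X. For any M ≥ 1 there is a nonempty clopen set Y ⊆ X such that for every x ∈ X the set P(x) = {m ∈ ℤ² : x ∈ φᵐ(Y)} is M-separated and 2M-syndetic as a subset of ℝ². -/

import Mathlib

open Metric

/-- The standard embedding of `ℤ²` into the Euclidean plane. -/
noncomputable def embZ2 (n : ℤ × ℤ) : EuclideanSpace ℝ (Fin 2) :=
  (WithLp.equiv 2 (Fin 2 → ℝ)).symm ![(n.1 : ℝ), (n.2 : ℝ)]

lemma embZ2_apply (n : ℤ × ℤ) (i : Fin 2) :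
    embZ2 n i = ![(n.1 : ℝ), (n.2 : ℝ)] i := by
  simp [embZ2]

lemma dist_embZ2 (m n : ℤ × ℤ) :
    dist (embZ2 m) (embZ2 n)
      = Real.sqrt (((m.1 : ℝ) - n.1) ^ 2 + ((m.2 : ℝ) - n.2) ^ 2) := by
  rw [EuclideanSpace.dist_eq]
  congr 1
  rw [Fin.sum_univ_two]
  simp [embZ2_apply, Real.dist_eq, sq_abs]

lemma dist_embZ2_add (n k : ℤ × ℤ) :
    dist (embZ2 n) (embZ2 (n + k)) = dist (embZ2 k) (embZ2 0) := by
  rw [dist_embZ2, dist_embZ2]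
  simp only [Prod.fst_add, Prod.snd_add, Prod.fst_zero, Prod.snd_zero]
  congr 1
  push_cast
  ring

lemma dist_embZ2_sub (m m' : ℤ × ℤ) :
    dist (embZ2 (m' - m)) (embZ2 0) = dist (embZ2 m) (embZ2 m') := by
  rw [dist_embZ2, dist_embZ2]
  simp only [Prod.fst_sub, Prod.snd_sub, Prod.fst_zero, Prod.snd_zero]
  congr 1
  push_cast
  ring

lemma abs_fst_le_dist (m : ℤ × ℤ) : |(m.1 : ℝ)| ≤ dist (embZ2 m) (embZ2 0) := by
  rw [dist_embZ2]
  simp only [Prod.fst_zero, Prod.snd_zero, Int.cast_zero, sub_zero]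
  rw [← Real.sqrt_sq_eq_abs]
  exact Real.sqrt_le_sqrt (by nlinarith [sq_nonneg ((m.2 : ℝ))])

lemma abs_snd_le_dist (m : ℤ × ℤ) : |(m.2 : ℝ)| ≤ dist (embZ2 m) (embZ2 0) := by
  rw [dist_embZ2]
  simp only [Prod.fst_zero, Prod.snd_zero, Int.cast_zero, sub_zero]
  rw [← Real.sqrt_sq_eq_abs]
  exact Real.sqrt_le_sqrt (by nlinarith [sq_nonneg ((m.1 : ℝ))])

section Greedy

variable {X : Type*} [TopologicalSpace X] (φ : ℤ × ℤ → X ≃ₜ X)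

/-- Greedy enlargement of a clopen set along a list of translates. -/
def greedy (B : Finset (ℤ × ℤ)) (U : Set X) : List (ℤ × ℤ) → Set X
  | [] => U
  | n :: L => greedy B U L ∪ ((φ n '' U) \ ⋃ k ∈ B, φ k '' greedy B U L)

variable {B : Finset (ℤ × ℤ)} {U : Set X}

lemma subset_greedy (L : List (ℤ × ℤ)) : U ⊆ greedy φ B U L := by
  induction L with
  | nil => exact subset_rfl
  | cons n L ih => exact ih.trans Set.subset_union_left

lemma greedy_isClopen (hU : IsClopen U) (L : List (ℤ × ℤ)) :
    IsClopen (greedy φ B U L) := by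
  induction L with
  | nil => exact hU
  | cons n L ih =>
    refine ih.union (IsClopen.diff ⟨(φ n).isClosedMap _ hU.isClosed,
      (φ n).isOpenMap _ hU.isOpen⟩ ?_)
    exact isClopen_biUnion_finset fun k _ =>
      ⟨(φ k).isClosedMap _ ih.isClosed, (φ k).isOpenMap _ ih.isOpen⟩

lemma greedy_disjoint (h0 : φ 0 = Homeomorph.refl X)
    (hadd : ∀ (m n : ℤ × ℤ) (x : X), φ (m + n) x = φ m (φ n x))
    (hB0 : (0 : ℤ × ℤ) ∈ B) (hBsymm : ∀ k ∈ B, -k ∈ B)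
    (hU : ∀ k ∈ B, k ≠ 0 → ∀ x ∈ U, φ k x ∉ U) (L : List (ℤ × ℤ)) :
    ∀ k ∈ B, k ≠ 0 → ∀ x ∈ greedy φ B U L, φ k x ∉ greedy φ B U L := by
  induction L with
  | nil => exact hU
  | cons n L ih =>
    intro k hk hk0 x hx hkx
    rcases hx with hx | hx
    · rcases hkx with hkx | hkx
      · exact ih k hk hk0 x hx hkx
      · exact hkx.2 (Set.mem_biUnion hk ⟨x, hx, rfl⟩)
    · rcases hkx with hkx | hkx
      · refine hx.2 (Set.mem_biUnion (hBsymm k hk) ⟨φ k x, hkx, ?_⟩)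
        rw [← hadd, neg_add_cancel, h0]
        rfl
      · obtain ⟨u, hu, hux⟩ := hx.1
        obtain ⟨u', hu', hux'⟩ := hkx.1
        have h1 : φ (k + n) u = φ n u' := by
          rw [hadd, hux, hux']
        have key : φ k u = u' := by
          have e3 : (-n : ℤ × ℤ) + (k + n) = k := by ring
          calc φ k u = φ (-n + (k + n)) u := by rw [e3]
            _ = φ (-n) (φ (k + n) u) := hadd _ _ _
            _ = φ (-n) (φ n u') := by rw [h1]
            _ = φ (-n + n) u' := (hadd _ _ _).symm
            _ = u' := by rw [neg_add_cancel, h0]; rfl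
        exact hU k hk hk0 u hu (by rw [key]; exact hu')

lemma greedy_covers (h0 : φ 0 = Homeomorph.refl X) (hB0 : (0 : ℤ × ℤ) ∈ B)
    (L : List (ℤ × ℤ)) :
    ∀ n ∈ L, ∀ x : X, x ∈ φ n '' U → ∃ k ∈ B, x ∈ φ k '' greedy φ B U L := by
  induction L with
  | nil => simp
  | cons m L ih =>
    intro n hn x hx
    rcases List.mem_cons.mp hn with rfl | hn
    · by_cases hT : x ∈ ⋃ k ∈ B, φ k '' greedy φ B U L
      · simp only [Set.mem_iUnion, Set.mem_image] at hT
        obtain ⟨k, hk, y, hy, hyx⟩ := hT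
        exact ⟨k, hk, y, Set.mem_union_left _ hy, hyx⟩
      · refine ⟨0, hB0, x, Set.mem_union_right _ ⟨hx, hT⟩, ?_⟩
        rw [h0]; rfl
    · obtain ⟨k, hk, y, hy, hyx⟩ := ih n hn x hx
      exact ⟨k, hk, y, Set.mem_union_left _ hy, hyx⟩

end Greedy

/-- For a free minimal action `φ` of `ℤ²` on a Cantor set `X` and any `M ≥ 1`, there is a
nonempty clopen `Y ⊆ X` such that for every `x`, the set
`P(x) = {m : x ∈ φᵐ(Y)}` is `M`-separated and `2M`-syndetic as a subset of `ℝ²`. -/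
theorem stmt12 {X : Type*} [TopologicalSpace X] [CompactSpace X]
    [TopologicalSpace.MetrizableSpace X] [TotallyDisconnectedSpace X] [PerfectSpace X]
    [Nonempty X]
    (φ : ℤ × ℤ → X ≃ₜ X) (h0 : φ 0 = Homeomorph.refl X)
    (hadd : ∀ (m n : ℤ × ℤ) (x : X), φ (m + n) x = φ m (φ n x))
    (hfree : ∀ (n : ℤ × ℤ) (x : X), φ n x = x → n = 0)
    (hmin : ∀ x : X, Dense (Set.range fun n : ℤ × ℤ => φ n x))
    (M : ℝ) (hM : 1 ≤ M) :
    ∃ Y : Set X, IsClopen Y ∧ Y.Nonempty ∧ ∀ x : X,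
      (∀ m ∈ {k : ℤ × ℤ | x ∈ (φ k) '' Y}, ∀ m' ∈ {k : ℤ × ℤ | x ∈ (φ k) '' Y},
        m ≠ m' → M ≤ dist (embZ2 m) (embZ2 m')) ∧
      (∀ v : EuclideanSpace ℝ (Fin 2),
        ∃ m ∈ {k : ℤ × ℤ | x ∈ (φ k) '' Y}, dist v (embZ2 m) < 2 * M) := by
  classical
  have hM0 : (0 : ℝ) < M := lt_of_lt_of_le one_pos hM
  have hinv : ∀ (n : ℤ × ℤ) (x : X), φ (-n) (φ n x) = x := by
    intro n x
    rw [← hadd, neg_add_cancel, h0]; rfl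
  have hinv' : ∀ (n : ℤ × ℤ) (x : X), φ n (φ (-n) x) = x := by
    intro n x
    rw [← hadd, add_neg_cancel, h0]; rfl
  obtain ⟨x₀⟩ := ‹Nonempty X›
  set K : ℤ := ⌈M⌉ with hK
  set B : Finset (ℤ × ℤ) := (Finset.Icc (-K, -K) (K, K)).filter
      (fun k => dist (embZ2 k) (embZ2 0) < M) with hBdef
  have hKpos : (0 : ℤ) ≤ K := le_of_lt (Int.ceil_pos.mpr hM0)
  have hB0 : (0 : ℤ × ℤ) ∈ B := by
    rw [hBdef, Finset.mem_filter]
    refine ⟨?_, by simpa using hM0⟩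
    rw [Finset.mem_Icc]
    constructor <;> simp [Prod.le_def] <;> omega
  have hBsymm : ∀ k ∈ B, -k ∈ B := by
    intro k hk
    rw [hBdef, Finset.mem_filter] at hk ⊢
    obtain ⟨hbox, hdist⟩ := hk
    rw [Finset.mem_Icc] at hbox ⊢
    simp only [Prod.le_def, Prod.fst_neg, Prod.snd_neg] at hbox ⊢
    constructor
    · constructor
      · constructor <;> omega
      · constructor <;> omega
    · have : dist (embZ2 (-k)) (embZ2 0) = dist (embZ2 k) (embZ2 0) := by
        rw [dist_embZ2, dist_embZ2]
        simp only [Prod.fst_neg, Prod.snd_neg, Prod.fst_zero, Prod.snd_zero]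
        congr 1
        push_cast
        ring
      rw [this]
      exact hdist
  have hBmem : ∀ k : ℤ × ℤ, dist (embZ2 k) (embZ2 0) < M → k ∈ B := by
    intro k hk
    rw [hBdef, Finset.mem_filter]
    refine ⟨?_, hk⟩
    rw [Finset.mem_Icc]
    have hMK : M ≤ (K : ℝ) := Int.le_ceil M
    have h1 : |(k.1 : ℝ)| ≤ (K : ℝ) := le_of_lt (lt_of_le_of_lt (abs_fst_le_dist k)
      (lt_of_lt_of_le hk hMK))
    have h2 : |(k.2 : ℝ)| ≤ (K : ℝ) := le_of_lt (lt_of_le_of_lt (abs_snd_le_dist k)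
      (lt_of_lt_of_le hk hMK))
    rw [← Int.cast_abs, Int.cast_le] at h1 h2
    rw [abs_le] at h1 h2
    simp only [Prod.le_def]
    exact ⟨⟨h1.1, h2.1⟩, ⟨h1.2, h2.2⟩⟩
  -- construct the base clopen set U
  haveI : TotallySeparatedSpace X := loc_compact_t2_tot_disc_iff_tot_sep.mp inferInstance
  have hW : ∀ k : ℤ × ℤ, ∃ W : Set X, IsClopen W ∧ x₀ ∈ W ∧
      (k ≠ 0 → ∀ x ∈ W, φ k x ∉ W) := by
    intro k
    by_cases hk : k = 0
    · exact ⟨Set.univ, isClopen_univ, trivial, fun h => (h hk).elim⟩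
    · have hne : φ k x₀ ≠ x₀ := fun h => hk (hfree k x₀ h)
      obtain ⟨C, hC, hC1, hC2⟩ := exists_isClopen_of_totally_separated hne
      refine ⟨Cᶜ ∩ (φ k) ⁻¹' C, hC.compl.inter (hC.preimage (φ k).continuous),
        ⟨hC2, hC1⟩, fun _ x hx hkx => hkx.1 hx.2⟩
  choose W hWc hWx hWd using hW
  set U : Set X := ⋂ k ∈ B, W k with hUdef
  have hUclopen : IsClopen U := isClopen_biInter_finset fun k _ => hWc k
  have hUx₀ : x₀ ∈ U := Set.mem_biInter fun k _ => hWx k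
  have hUdisj : ∀ k ∈ B, k ≠ 0 → ∀ x ∈ U, φ k x ∉ U := by
    intro k hk hk0 x hx hkx
    exact hWd k hk0 x (Set.biInter_subset_of_mem hk hx)
      (Set.biInter_subset_of_mem hk hkx)
  -- covering by finitely many translates
  have hcover : (Set.univ : Set X) ⊆ ⋃ n : ℤ × ℤ, φ n '' U := by
    intro x _
    obtain ⟨y, hys, hyU⟩ := (hmin x).exists_mem_open hUclopen.isOpen ⟨x₀, hUx₀⟩
    obtain ⟨n, rfl⟩ := hys
    exact Set.mem_iUnion.mpr ⟨-n, ⟨φ n x, hyU, hinv n x⟩⟩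
  obtain ⟨t, ht⟩ := isCompact_univ.elim_finite_subcover (fun n : ℤ × ℤ => φ n '' U)
    (fun n => (φ n).isOpenMap _ hUclopen.isOpen) hcover
  set L : List (ℤ × ℤ) := t.toList with hL
  set Y : Set X := greedy φ B U L with hYdef
  have hYclopen : IsClopen Y := greedy_isClopen φ hUclopen L
  have hYne : Y.Nonempty := ⟨x₀, subset_greedy φ L hUx₀⟩
  have hYdisj : ∀ k ∈ B, k ≠ 0 → ∀ x ∈ Y, φ k x ∉ Y :=
    greedy_disjoint φ h0 hadd hB0 hBsymm hUdisj L
  have hYcov : ∀ x : X, ∃ k ∈ B, x ∈ φ k '' Y := by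
    intro x
    have hx := ht (Set.mem_univ x)
    simp only [Set.mem_iUnion] at hx
    obtain ⟨n, hn, hxn⟩ := hx
    exact greedy_covers φ h0 hB0 L n (Finset.mem_toList.mpr hn) x hxn
  refine ⟨Y, hYclopen, hYne, fun x => ⟨?_, ?_⟩⟩
  · -- separation
    intro m hm m' hm' hne
    by_contra hlt
    push_neg at hlt
    have hk0 : m' - m ≠ 0 := sub_ne_zero.mpr (Ne.symm hne)
    have hkB : m' - m ∈ B := hBmem _ (by rw [dist_embZ2_sub]; exact hlt)
    obtain ⟨y, hy, hyx⟩ := hm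
    obtain ⟨y', hy', hyx'⟩ := hm'
    have key : φ (m' - m) y' = y := by
      have e3 : m' - m = -m + m' := by ring
      rw [e3, hadd, hyx', ← hyx, ← hadd, neg_add_cancel, h0]; rfl
    exact hYdisj (m' - m) hkB hk0 y' hy' (by rw [key]; exact hy)
  · -- syndeticity
    intro v
    set n : ℤ × ℤ := (round (v 0), round (v 1)) with hn
    have hd0 : dist (v 0) (embZ2 n 0) ≤ 1 / 2 := by
      rw [embZ2_apply]
      simpa [Real.dist_eq, hn] using abs_sub_round (v 0)
    have hd1 : dist (v 1) (embZ2 n 1) ≤ 1 / 2 := by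
      rw [embZ2_apply]
      simpa [Real.dist_eq, hn] using abs_sub_round (v 1)
    have hvn : dist v (embZ2 n) ≤ 3 / 4 := by
      rw [EuclideanSpace.dist_eq, Fin.sum_univ_two]
      have hs : dist (v 0) (embZ2 n 0) ^ 2 + dist (v 1) (embZ2 n 1) ^ 2 ≤ (3 / 4) ^ 2 := by
        nlinarith [dist_nonneg (x := v 0) (y := embZ2 n 0),
          dist_nonneg (x := v 1) (y := embZ2 n 1)]
      calc Real.sqrt (dist (v 0) (embZ2 n 0) ^ 2 + dist (v 1) (embZ2 n 1) ^ 2)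
          ≤ Real.sqrt ((3 / 4) ^ 2) := Real.sqrt_le_sqrt hs
        _ = 3 / 4 := Real.sqrt_sq (by norm_num)
    obtain ⟨k, hkB, y, hy, hyk⟩ := hYcov (φ (-n) x)
    refine ⟨n + k, ⟨y, hy, ?_⟩, ?_⟩
    · rw [hadd, hyk, hinv']
    · have hkd : dist (embZ2 k) (embZ2 0) < M := by
        rw [hBdef, Finset.mem_filter] at hkB
        exact hkB.2
      have hdist : dist (embZ2 n) (embZ2 (n + k)) < M := by
        rw [dist_embZ2_add]; exact hkd
      calc dist v (embZ2 (n + k))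
          ≤ dist v (embZ2 n) + dist (embZ2 n) (embZ2 (n + k)) := dist_triangle _ _ _
        _ < 3 / 4 + M := by linarith
        _ ≤ 2 * M := by linarith
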